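/- Let f be analytic on the polydisc D_{ρ₁,...,ρ_N} ⊂ ℂ^N, let s ∈ [1,∞)^N, let 0 < r < min(ρ₁,...,ρ_N), let α ∈ [1,∞)^N ∪ {0} and β ∈ [1,∞)^N. Then ‖f‖_{α+β,r,s} ≤ r^{λ(β)} ‖f‖_{α,r,s}, where λ(β) = β₁ + ⋯ + β_N. -/

import Mathlib

/-- Generalized binomial coefficient `binom(α+j−1, j) = (∏_{i=0}^{j−1}(α+i))/j!`. -/
noncomputable def genBinom (α : ℝ) (j : ℕ) : ℝ :=
  (∏ i ∈ Finset.range j, (α + i)) / (j.factorial : ℝ)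

/-- Taylor coefficients of an analytic function on the polydisc `D_{ρ₁,...,ρ_N}`. -/
def AnalyticCoeffs {N : ℕ} (ρ : Fin N → ℝ) (f : (Fin N → ℕ) → ℂ) : Prop :=
  ∀ r : Fin N → ℝ, (∀ d, 0 ≤ r d) → (∀ d, r d < ρ d) →
    Summable fun J : Fin N → ℕ => ‖f J‖ * ∏ d, r d ^ J d

/-- The majorization set defining the modified Nagumo norm for `α ≠ 0`. -/
def nagumoSet {N : ℕ} (f : (Fin N → ℕ) → ℂ) (α : Fin N → ℝ) (r : ℝ) (s : Fin N → ℝ) :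
    Set ℝ :=
  {A : ℝ | 0 ≤ A ∧ ∀ J : Fin N → ℕ,
    ‖f J‖ ≤ A * ∏ d, r ^ (-(α d)) * genBinom (α d) (J d) ^ s d * (r ^ J d)⁻¹}

open Classical in
/-- The modified Nagumo norm `‖f‖_{α,r,s}`. -/
noncomputable def nagumoNorm {N : ℕ} (f : (Fin N → ℕ) → ℂ) (α : Fin N → ℝ) (r : ℝ)
    (s : Fin N → ℝ) : ℝ :=
  if α = 0 then ∑' J : Fin N → ℕ, ‖f J‖ * r ^ (∑ d, J d)
  else sInf (nagumoSet f α r s)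

lemma genBinom_ge_one {a : ℝ} (ha : 1 ≤ a) (j : ℕ) : 1 ≤ genBinom a j := by
  have hj : (0 : ℝ) < j.factorial := by positivity
  rw [genBinom, le_div_iff₀ hj, one_mul]
  calc (j.factorial : ℝ) = ∏ i ∈ Finset.range j, ((i : ℝ) + 1) := by
        exact_mod_cast (Finset.prod_range_add_one_eq_factorial j).symm
    _ ≤ ∏ i ∈ Finset.range j, (a + i) := by
        apply Finset.prod_le_prod
        · intro i _; positivity
        · intro i _; linarith

lemma genBinom_mono {a b : ℝ} (ha : 0 ≤ a) (hab : a ≤ b) (j : ℕ) :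
    genBinom a j ≤ genBinom b j := by
  have hj : (0 : ℝ) < j.factorial := by positivity
  rw [genBinom, genBinom, div_le_div_iff₀ hj hj]
  have h : (∏ i ∈ Finset.range j, (a + i)) ≤ ∏ i ∈ Finset.range j, (b + i) :=
    Finset.prod_le_prod (fun i _ => by positivity) (fun i _ => by linarith)
  exact mul_le_mul_of_nonneg_right h hj.le

theorem nagumoNorm_add_index (N : ℕ) (ρ : Fin N → ℝ) (hρ : ∀ d, 0 < ρ d)
    (f : (Fin N → ℕ) → ℂ) (hf : AnalyticCoeffs ρ f)
    (s : Fin N → ℝ) (hs : ∀ d, 1 ≤ s d)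
    (r : ℝ) (hr : 0 < r) (hrρ : ∀ d, r < ρ d)
    (α : Fin N → ℝ) (hα : (∀ d, 1 ≤ α d) ∨ α = 0)
    (β : Fin N → ℝ) (hβ : ∀ d, 1 ≤ β d) :
    nagumoNorm f (α + β) r s ≤ r ^ (∑ d, β d) * nagumoNorm f α r s := by
  classical
  have hg : Summable fun J : Fin N → ℕ => ‖f J‖ * ∏ d, r ^ J d :=
    hf (fun _ => r) (fun _ => hr.le) (fun d => hrρ d)
  set S : ℝ := ∑' J : Fin N → ℕ, ‖f J‖ * ∏ d, r ^ J d with hSdef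
  have hterm : ∀ J, ‖f J‖ * ∏ d, r ^ J d ≤ S := fun J =>
    Summable.le_tsum hg J (fun J' _ => by positivity)
  have hSnn : 0 ≤ S := tsum_nonneg fun J => by positivity
  have hmem : ∀ γ : Fin N → ℝ, (∀ d, 1 ≤ γ d) →
      r ^ (∑ d, γ d) * S ∈ nagumoSet f γ r s := by
    intro γ hγ
    have hcγ : (0 : ℝ) < r ^ (∑ d, γ d) := Real.rpow_pos_of_pos hr _
    refine ⟨by positivity, fun J => ?_⟩
    have hP : (0 : ℝ) < ∏ d, r ^ J d := by positivity
    have h1 : ‖f J‖ ≤ S * ∏ d, (r ^ J d)⁻¹ := by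
      rw [Finset.prod_inv_distrib, ← div_eq_mul_inv, le_div_iff₀ hP]
      exact hterm J
    have heq : r ^ (∑ d, γ d) * S *
        (∏ d, r ^ (-(γ d)) * genBinom (γ d) (J d) ^ s d * (r ^ J d)⁻¹)
        = S * ∏ d, genBinom (γ d) (J d) ^ s d * (r ^ J d)⁻¹ := by
      rw [Real.rpow_sum_of_pos hr]
      have hsplit : (∏ d : Fin N, r ^ γ d) * S *
          (∏ d, r ^ (-(γ d)) * genBinom (γ d) (J d) ^ s d * (r ^ J d)⁻¹)
          = S * ∏ d, r ^ γ d * (r ^ (-(γ d)) * genBinom (γ d) (J d) ^ s d * (r ^ J d)⁻¹) := by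
        conv_rhs => rw [Finset.prod_mul_distrib]
        ring
      rw [hsplit]
      congr 1
      apply Finset.prod_congr rfl
      intro d _
      have : r ^ (γ d) * r ^ (-(γ d)) = 1 := by
        rw [← Real.rpow_add hr]; simp
      calc r ^ (γ d) * (r ^ (-(γ d)) * genBinom (γ d) (J d) ^ s d * (r ^ J d)⁻¹)
          = (r ^ (γ d) * r ^ (-(γ d))) * (genBinom (γ d) (J d) ^ s d * (r ^ J d)⁻¹) := by
            ring
        _ = genBinom (γ d) (J d) ^ s d * (r ^ J d)⁻¹ := by rw [this, one_mul]
    rw [heq]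
    refine h1.trans (mul_le_mul_of_nonneg_left ?_ hSnn)
    apply Finset.prod_le_prod
    · intro d _; positivity
    · intro d _
      refine le_mul_of_one_le_left (by positivity) ?_
      exact Real.one_le_rpow (genBinom_ge_one (hγ d) _) (by linarith [hs d])
  rcases Nat.eq_zero_or_pos N with hN | hN
  · subst hN
    have hab : α + β = 0 := funext fun d => d.elim0
    have ha0 : α = 0 := funext fun d => d.elim0
    rw [nagumoNorm, nagumoNorm, if_pos hab, if_pos ha0]
    simp
  · set d₀ : Fin N := ⟨0, hN⟩
    have hα0 : ∀ d, 0 ≤ α d := by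
      rcases hα with h | h
      · intro d; linarith [h d]
      · intro d; simp [h]
    have hab1 : ∀ d, 1 ≤ (α + β) d := fun d => by
      have := hα0 d; have := hβ d; simp only [Pi.add_apply]; linarith
    have hne : α + β ≠ 0 := by
      intro h
      have := congrFun h d₀
      rw [Pi.zero_apply] at this
      linarith [hab1 d₀]
    have hLbdd : BddBelow (nagumoSet f (α + β) r s) := ⟨0, fun A hA => hA.1⟩
    rw [nagumoNorm, if_neg hne]
    rcases hα with hα1 | hα0eq
    · -- α ∈ [1,∞)^N
      have hαne : α ≠ 0 := by
        intro h
        have := congrFun h d₀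
        rw [Pi.zero_apply] at this
        linarith [hα1 d₀]
      rw [nagumoNorm, if_neg hαne]
      set c : ℝ := r ^ (∑ d, β d) with hcdef
      have hc : 0 < c := Real.rpow_pos_of_pos hr _
      have key : ∀ A ∈ nagumoSet f α r s, c * A ∈ nagumoSet f (α + β) r s := by
        rintro A ⟨hA0, hAJ⟩
        refine ⟨by positivity, fun J => ?_⟩
        have heq : c * A *
            (∏ d, r ^ (-((α + β) d)) * genBinom ((α + β) d) (J d) ^ s d * (r ^ J d)⁻¹)
            = A * ∏ d, r ^ (-(α d)) * genBinom (α d + β d) (J d) ^ s d * (r ^ J d)⁻¹ := by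
          rw [hcdef, Real.rpow_sum_of_pos hr]
          have hsplit : (∏ d : Fin N, r ^ β d) * A *
              (∏ d, r ^ (-((α + β) d)) * genBinom ((α + β) d) (J d) ^ s d * (r ^ J d)⁻¹)
              = A * ∏ d, r ^ β d *
                (r ^ (-((α + β) d)) * genBinom ((α + β) d) (J d) ^ s d * (r ^ J d)⁻¹) := by
            conv_rhs => rw [Finset.prod_mul_distrib]
            ring
          rw [hsplit]
          congr 1
          apply Finset.prod_congr rfl
          intro d _
          simp only [Pi.add_apply]
          have h2 : r ^ (β d) * r ^ (-(α d + β d)) = r ^ (-(α d)) := by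
            rw [← Real.rpow_add hr]; ring_nf
          calc r ^ (β d) * (r ^ (-(α d + β d)) * genBinom (α d + β d) (J d) ^ s d * (r ^ J d)⁻¹)
              = (r ^ (β d) * r ^ (-(α d + β d))) *
                (genBinom (α d + β d) (J d) ^ s d * (r ^ J d)⁻¹) := by ring
            _ = r ^ (-(α d)) * genBinom (α d + β d) (J d) ^ s d * (r ^ J d)⁻¹ := by
                rw [h2]; ring
        rw [heq]
        refine (hAJ J).trans (mul_le_mul_of_nonneg_left ?_ hA0)
        apply Finset.prod_le_prod
        · intro d _
          have h1 : (0 : ℝ) ≤ genBinom (α d) (J d) :=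
            le_trans zero_le_one (genBinom_ge_one (hα1 d) _)
          positivity
        · intro d _
          have h1 : (0 : ℝ) ≤ genBinom (α d) (J d) :=
            le_trans zero_le_one (genBinom_ge_one (hα1 d) _)
          have h2 : genBinom (α d) (J d) ≤ genBinom (α d + β d) (J d) :=
            genBinom_mono (by linarith [hα1 d]) (by linarith [hβ d]) _
          have h3 : genBinom (α d) (J d) ^ s d ≤ genBinom (α d + β d) (J d) ^ s d :=
            Real.rpow_le_rpow h1 h2 (by linarith [hs d])
          have h4 : (0 : ℝ) ≤ r ^ (-(α d)) := Real.rpow_nonneg hr.le _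
          have h5 : (0 : ℝ) ≤ (r ^ J d : ℝ)⁻¹ := by positivity
          exact mul_le_mul_of_nonneg_right (mul_le_mul_of_nonneg_left h3 h4) h5
      have hRne : (nagumoSet f α r s).Nonempty := ⟨_, hmem α hα1⟩
      rw [mul_comm, ← div_le_iff₀ hc]
      apply le_csInf hRne
      intro A hA
      rw [div_le_iff₀ hc, mul_comm]
      exact csInf_le hLbdd (key A hA)
    · -- α = 0
      subst hα0eq
      rw [nagumoNorm, if_pos rfl]
      have hS' : (∑' J : Fin N → ℕ, ‖f J‖ * r ^ (∑ d, J d)) = S := by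
        rw [hSdef]
        apply tsum_congr
        intro J
        rw [Finset.prod_pow_eq_pow_sum]
      rw [hS']
      apply csInf_le hLbdd
      rw [zero_add] at hab1 ⊢
      exact hmem β hab1
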